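/- If G has independence number at most 2, then every linear coloring of G is also a centered coloring. -/

import Mathlib

/-- A linear coloring: every path in `G` contains a vertex whose color appears
exactly once on the path. -/
def IsLinearColoring {V C : Type*} [DecidableEq C] (G : SimpleGraph V) (ψ : V → C) : Prop :=
  ∀ ⦃u v : V⦄ (p : G.Walk u v), p.IsPath →
    ∃ w ∈ p.support, (p.support.map ψ).count (ψ w) = 1

/-- A centered coloring: every nonempty vertex set inducing a connected subgraph
contains a vertex whose color appears exactly once in the set. -/
def IsCenteredColoring {V C : Type*} [DecidableEq C] (G : SimpleGraph V) (φ : V → C) : Prop :=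
  ∀ S : Finset V, S.Nonempty → (G.induce (S : Set V)).Connected →
    ∃ w ∈ S, (S.filter (fun x => φ x = φ w)).card = 1

/-- The linear coloring number: minimum number of colors of a linear coloring. -/
noncomputable def chiLin {V : Type*} (G : SimpleGraph V) : ℕ :=
  sInf {k | ∃ ψ : V → Fin k, IsLinearColoring G ψ}

/-- The centered coloring number: minimum number of colors of a centered coloring. -/
noncomputable def chiCen {V : Type*} (G : SimpleGraph V) : ℕ :=
  sInf {k | ∃ φ : V → Fin k, IsCenteredColoring G φ}

/-- A treedepth decomposition of `G`: a rooted forest on the vertices of `G`,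
given by its ancestor relation `anc` (a partial order whose down-sets are chains),
such that every edge of `G` joins an ancestor-descendant pair. -/
structure TreedepthDecomp {V : Type*} (G : SimpleGraph V) where
  anc : V → V → Prop
  refl : ∀ v, anc v v
  antisymm : ∀ u v, anc u v → anc v u → u = v
  trans : ∀ u v w, anc u v → anc v w → anc u w
  chain : ∀ u v w, anc u w → anc v w → anc u v ∨ anc v u
  edge : ∀ u v, G.Adj u v → anc u v ∨ anc v u

/-- The decomposition has depth at most `k`: every ancestor-descendant chain has
at most `k` vertices. -/
def TreedepthDecomp.depthLE {V : Type*} {G : SimpleGraph V} (d : TreedepthDecomp G)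
    (k : ℕ) : Prop :=
  ∀ s : Finset V, (∀ a ∈ s, ∀ b ∈ s, d.anc a b ∨ d.anc b a) → s.card ≤ k

/-- The treedepth of `G`: minimum depth of a treedepth decomposition. -/
noncomputable def treedepth {V : Type*} (G : SimpleGraph V) : ℕ :=
  sInf {k | ∃ d : TreedepthDecomp G, d.depthLE k}

open SimpleGraph Walk

section Ham
variable {W : Type*} [Fintype W] [DecidableEq W] {H : SimpleGraph W}

omit [Fintype W] [DecidableEq W] in
lemma crossing_aux {S : List W} :
    ∀ {a b : W} (_w : H.Walk a b), a ∉ S → b ∈ S → ∃ y ∉ S, ∃ z ∈ S, H.Adj y z := by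
  intro a b w
  induction w with
  | nil => intro ha hb; exact absurd hb ha
  | @cons u v b h q ih =>
    intro ha hb
    by_cases hm : v ∈ S
    · exact ⟨u, ha, v, hm, h⟩
    · exact ih hm hb

omit [Fintype W] in
lemma length_rotate' {u v : W} (c : H.Walk v v) (h : u ∈ c.support) :
    (c.rotate u h).length = c.length := by
  have := congrArg Walk.length (c.take_spec h)
  rw [Walk.length_append] at this
  simp only [Walk.rotate, Walk.length_append]
  omega

omit [Fintype W] in
lemma not_edge_of_endpoints {u v : W} {p : H.Walk u v} (hp : p.IsPath)
    (hlen : 2 ≤ p.length) : s(u, v) ∉ p.edges := by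
  cases p with
  | nil => simp at hlen
  | @cons _ w _ h q =>
    rw [Walk.cons_isPath_iff] at hp
    intro hmem
    rw [Walk.edges_cons, List.mem_cons] at hmem
    rcases hmem with heq | hmem
    · rw [Sym2.eq_iff] at heq
      rcases heq with ⟨-, rfl⟩ | ⟨h1, -⟩
      · have h2 := congrArg Subtype.val (SimpleGraph.Path.loop_eq ⟨q, hp.1⟩)
        simp only at h2
        have hq0 : q.length = 0 := by rw [h2]; simp [SimpleGraph.Path.nil]
        rw [Walk.length_cons, hq0] at hlen
        omega
      · exact h.ne h1
    · exact hp.2 (q.fst_mem_support_of_mem_edges hmem)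

lemma exists_ham (H : SimpleGraph W) (hconn : H.Connected)
    (h3 : ∀ a b c : W, a ≠ b → a ≠ c → b ≠ c → H.Adj a b ∨ H.Adj a c ∨ H.Adj b c) :
    ∃ (u v : W) (p : H.Walk u v), p.IsPath ∧ ∀ x, x ∈ p.support := by
  classical
  obtain ⟨w0⟩ := hconn.nonempty
  set T : Set ℕ := {n | ∃ u v : W, ∃ p : H.Walk u v, p.IsPath ∧ p.length = n} with hT
  have hT0 : (0:ℕ) ∈ T := ⟨w0, w0, Walk.nil, Walk.IsPath.nil, rfl⟩
  have hbdd : BddAbove T := by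
    refine ⟨Fintype.card W, ?_⟩
    rintro n ⟨u, v, p, hp, rfl⟩
    have h1 : p.support.length ≤ Fintype.card W := hp.support_nodup.length_le_card
    rw [Walk.length_support] at h1
    omega
  have hNT : sSup T ∈ T := Nat.sSup_mem ⟨0, hT0⟩ hbdd
  set N := sSup T with hN
  obtain ⟨u, v, p, hp, hlen⟩ := hNT
  have hmax : ∀ {a b : W} (q : H.Walk a b), q.IsPath → q.length ≤ N :=
    fun q hq => le_csSup hbdd ⟨_, _, q, hq, rfl⟩
  refine ⟨u, v, p, hp, ?_⟩
  by_contra hx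
  push_neg at hx
  obtain ⟨x, hxs⟩ := hx
  -- no vertex outside the path is adjacent to an endpoint
  have hnu : ∀ y, y ∉ p.support → ¬ H.Adj y u := by
    intro y hy hadj
    have hq : (Walk.cons hadj p).IsPath := hp.cons hy
    have := hmax _ hq
    simp only [Walk.length_cons] at this
    omega
  have hnv : ∀ y, y ∉ p.support → ¬ H.Adj y v := by
    intro y hy hadj
    have hy' : y ∉ p.reverse.support := by
      rwa [Walk.support_reverse, List.mem_reverse]
    have hq : (Walk.cons hadj p.reverse).IsPath := hp.reverse.cons hy'
    have := hmax _ hq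
    simp only [Walk.length_cons, Walk.length_reverse] at this
    omega
  -- N ≥ 1 : otherwise H has no edges at all
  have hN1 : 1 ≤ N := by
    by_contra hN0
    have hE : ∀ a b : W, ¬ H.Adj a b := by
      intro a b hab
      have := hmax (Walk.cons hab Walk.nil)
        (Walk.IsPath.nil.cons (by simp [Walk.support_nil]; exact hab.ne))
      simp at this; omega
    have hxu : x ≠ u := fun h => hxs (h ▸ p.start_mem_support)
    obtain ⟨w⟩ := hconn x u
    cases w with
    | nil => exact hxu rfl
    | cons h q => exact hE _ _ h
  have hne_uv : u ≠ v := by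
    intro h; subst h
    have h2 := congrArg Subtype.val (SimpleGraph.Path.loop_eq ⟨p, hp⟩)
    simp only at h2
    rw [h2] at hlen
    simp [SimpleGraph.Path.nil] at hlen
    omega
  have hxu : x ≠ u := fun h => hxs (h ▸ p.start_mem_support)
  have hxv : x ≠ v := fun h => hxs (h ▸ p.end_mem_support)
  have huv : H.Adj u v := by
    rcases h3 x u v hxu hxv hne_uv with h1 | h1 | h1
    · exact absurd h1 (hnu x hxs)
    · exact absurd h1 (hnv x hxs)
    · exact h1
  -- crossing edge
  obtain ⟨w⟩ := hconn x u
  obtain ⟨y, hy, z, hz, hyz⟩ := crossing_aux w hxs p.start_mem_support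
  have hzu : z ≠ u := fun h => hnu y hy (h ▸ hyz)
  have hzv : z ≠ v := fun h => hnv y hy (h ▸ hyz)
  -- p has length ≥ 2
  have hlen2 : 2 ≤ p.length := by
    by_contra hcon
    interval_cases hl : p.length
    · omega
    · -- length 1 : support = [u, v]
      cases p with
      | nil => simp at hl
      | cons h q =>
        cases q with
        | nil =>
          simp only [Walk.support_cons, Walk.support_nil, List.mem_cons,
            List.mem_singleton] at hz
          rcases hz with rfl | rfl | h'
          · exact hzu rfl
          · exact hzv rfl
          · simp at h'
        | cons h' q' => simp [Walk.length_cons] at hl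
  -- build the cycle
  have hrevpath : p.reverse.IsPath := hp.reverse
  have hne : s(u, v) ∉ p.reverse.edges := by
    rw [Walk.edges_reverse, List.mem_reverse]
    exact not_edge_of_endpoints hp hlen2
  have hcyc : (Walk.cons huv p.reverse).IsCycle :=
    SimpleGraph.Path.cons_isCycle ⟨p.reverse, hrevpath⟩ huv hne
  set c : H.Walk u u := Walk.cons huv p.reverse with hc
  have hzc : z ∈ c.support := by
    rw [hc, Walk.support_cons]
    right
    rw [Walk.support_reverse]
    exact List.mem_reverse.mpr hz
  set c' : H.Walk z z := c.rotate z hzc with hc'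
  have hcyc' : c'.IsCycle := hcyc.rotate hzc
  have hnn : ¬ c'.Nil := hcyc'.not_nil
  obtain ⟨w1, h1, q, hq_eq⟩ := Walk.not_nil_iff.mp hnn
  have hq_sup : c'.support = z :: q.support := by rw [hq_eq, Walk.support_cons]
  have hq_path : q.IsPath := by
    rw [Walk.isPath_def]
    have := hcyc'.support_nodup
    rw [hq_sup] at this
    exact this
  have hyq : y ∉ q.reverse.support := by
    rw [Walk.support_reverse, List.mem_reverse]
    intro hyq
    have hyc' : y ∈ c'.support.tail := by rw [hq_sup]; exact hyq
    have hperm := Walk.support_rotate c z hzc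
    rw [← hc'] at hperm
    have hyc : y ∈ c.support.tail := hperm.mem_iff.mp hyc'
    rw [hc, Walk.support_cons, List.tail_cons, Walk.support_reverse,
      List.mem_reverse] at hyc
    exact hy hyc
  have hfin : (Walk.cons hyz q.reverse).IsPath := by
    refine Walk.IsPath.cons hq_path.reverse ?_
    · exact hyq
  have hlenf := hmax _ hfin
  have hlc' : c'.length = c.length := length_rotate' c hzc
  have hlq : q.length + 1 = c'.length := by rw [hq_eq, Walk.length_cons]
  rw [hc, Walk.length_cons, Walk.length_reverse, hlen] at hlc'
  simp only [Walk.length_cons, Walk.length_reverse] at hlenf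
  omega
end Ham


lemma count_filter_toFinset {α β : Type*} [DecidableEq α] [DecidableEq β]
    (l : List α) (hl : l.Nodup) (f : α → β) (b : β) :
    (l.toFinset.filter (fun x => f x = b)).card = (l.map f).count b := by
  induction l with
  | nil => simp
  | cons a t ih =>
    rw [List.nodup_cons] at hl
    rw [List.map_cons, List.count_cons, List.toFinset_cons, Finset.filter_insert]
    by_cases hfa : f a = b
    · rw [if_pos hfa, Finset.card_insert_of_notMem (by simp [hl.1]), ih hl.2]
      simp [hfa]
    · rw [if_neg hfa, ih hl.2]
      simp [hfa]


/-- If `G` has independence number at most `2`, then every linear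
coloring of `G` is also a centered coloring. -/
theorem linear_is_centered_of_independenceNumber_le_two {V : Type*} [Fintype V]
    (G : SimpleGraph V)
    (hind : ∀ s : Finset V, (∀ a ∈ s, ∀ b ∈ s, a ≠ b → ¬ G.Adj a b) → s.card ≤ 2)
    {C : Type*} [DecidableEq C] (ψ : V → C) (h : IsLinearColoring G ψ) :
    IsCenteredColoring G ψ := by
  classical
  intro S hS hconn
  have h3 : ∀ a b c : ↥(S : Set V), a ≠ b → a ≠ c → b ≠ c →
      (G.induce (S : Set V)).Adj a b ∨ (G.induce (S : Set V)).Adj a c ∨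
      (G.induce (S : Set V)).Adj b c := by
    intro a b c hab hac hbc
    by_contra hcon
    push_neg at hcon
    obtain ⟨n1, n2, n3⟩ := hcon
    have n1' : ¬ G.Adj ↑a ↑b := fun hadj => n1 (by simpa using hadj)
    have n2' : ¬ G.Adj ↑a ↑c := fun hadj => n2 (by simpa using hadj)
    have n3' : ¬ G.Adj ↑b ↑c := fun hadj => n3 (by simpa using hadj)
    have hab' : (a:V) ≠ b := fun h' => hab (Subtype.ext h')
    have hac' : (a:V) ≠ c := fun h' => hac (Subtype.ext h')
    have hbc' : (b:V) ≠ c := fun h' => hbc (Subtype.ext h')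
    have hcard := hind {↑a, ↑b, ↑c} ?_
    · rw [Finset.card_insert_of_notMem (by simp [hab', hac']),
        Finset.card_insert_of_notMem (by simp [hbc']), Finset.card_singleton] at hcard
      omega
    · intro x hx y hy hxy
      simp only [Finset.mem_insert, Finset.mem_singleton] at hx hy
      rcases hx with rfl | rfl | rfl <;> rcases hy with rfl | rfl | rfl <;>
        first
          | exact absurd rfl hxy
          | assumption
          | exact fun h' => n1' h'.symm
          | exact fun h' => n2' h'.symm
          | exact fun h' => n3' h'.symm
  obtain ⟨u, v, p, hp, hall⟩ := exists_ham (G.induce (S : Set V)) hconn h3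
  let f : G.induce (S : Set V) →g G := ⟨Subtype.val, fun {a b} hadj => by simpa using hadj⟩
  have hp' : (p.map f).IsPath :=
    Walk.map_isPath_of_injective (f := f) Subtype.val_injective hp
  obtain ⟨w, hwmem, hcount⟩ := h (p.map f) hp'
  have hsup : (p.map f).support = p.support.map Subtype.val := Walk.support_map f p
  have hwS : w ∈ S := by
    rw [hsup] at hwmem
    obtain ⟨w', hw', rfl⟩ := List.mem_map.mp hwmem
    exact Finset.mem_coe.mp w'.2
  refine ⟨w, hwS, ?_⟩
  have hnd : (p.map f).support.Nodup := hp'.support_nodup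
  have htf : (p.map f).support.toFinset = S := by
    ext x
    simp only [List.mem_toFinset, hsup, List.mem_map]
    constructor
    · rintro ⟨w', hw', rfl⟩; exact Finset.mem_coe.mp w'.2
    · intro hx; exact ⟨⟨x, hx⟩, hall _, rfl⟩
  rw [← htf, count_filter_toFinset _ hnd ψ (ψ w)]
  exact hcount
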